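/- For all n_p ∈ (0,1) and a ∈ ℝ, it is not the case that both a < (1/2)·n_p/(1−n_p) and a > (2/5)·(3−n_p)/(1−n_p); equivalently, the conditions required for the interior equilibrium to be both non-spurious (in (0,1)×(0,1)) and linearly stable are contradictory, since (1/2)·n_p = (2/5)·(3−n_p) forces n_p = 4/3 ∉ (0,1). Hence the interior equilibrium is never stable. -/
import Mathlib


/-- The interior equilibrium is never stable: the required parameter set is empty. -/
theorem interior_never_stable (np : ℝ) (hnp : np ∈ Set.Ioo (0:ℝ) 1) :
    {a : ℝ | a < np/(2*(1 - np)) ∧ (2/5) * (3 - np)/(1 - np) < a} = ∅ := by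
  obtain ⟨h0, h1⟩ := hnp
  ext a
  simp only [Set.mem_setOf_eq, Set.mem_empty_iff_false, iff_false, not_and, not_lt]
  intro h
  have hpos : (0:ℝ) < 1 - np := by linarith
  rw [lt_div_iff₀ (by linarith : (0:ℝ) < 2*(1-np))] at h
  rw [le_div_iff₀ (by linarith)]
  nlinarith
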